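/- arXiv:1512.02300 — 5 statements merged into one kernel-verified Lean document; each statement's English description precedes it below -/
import Mathlib

section
/- Let Y be a random variable taking values in [0,1] and suppose that y·P[Y ≥ y] ≤ v for all y ∈ [0,1], where v ∈ [0,1]. Then Var(Y) ≤ 2v. -/
open MeasureTheory ProbabilityTheory

theorem stmt_6 {Ω : Type*} [MeasurableSpace Ω] {μ : Measure Ω} [IsProbabilityMeasure μ]
    (Y : Ω → ℝ) (hY : Measurable Y) (hrange : ∀ ω, Y ω ∈ Set.Icc (0 : ℝ) 1)
    (v : ℝ) (hv : v ∈ Set.Icc (0 : ℝ) 1)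
    (hrev : ∀ y ∈ Set.Icc (0 : ℝ) 1, y * (μ {ω | y ≤ Y ω}).toReal ≤ v) :
    variance Y μ ≤ 2 * v := by
  have hL2 : MemLp Y 2 μ := by
    apply MemLp.of_bound hY.aestronglyMeasurable 1
    filter_upwards with ω
    rw [Real.norm_eq_abs, abs_le]
    exact ⟨le_trans (by norm_num) (hrange ω).1, (hrange ω).2⟩
  have hsq : ∫ ω, (Y ω) ^ 2 ∂μ ≤ 2 * v := by
    have hnn : 0 ≤ᵐ[μ] fun ω => (Y ω) ^ 2 := by
      filter_upwards with ω; positivity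
    rw [integral_eq_lintegral_of_nonneg_ae hnn (hY.pow_const 2).aestronglyMeasurable]
    have hlayer : ∫⁻ ω, ENNReal.ofReal ((Y ω) ^ 2) ∂μ
        = ∫⁻ t in Set.Ioi (0:ℝ), μ {a | t ≤ Y a} * ENNReal.ofReal (2 * t) := by
      have := lintegral_comp_eq_lintegral_meas_le_mul (f := Y) (g := fun t => 2 * t) μ
        (ae_of_all _ fun ω => (hrange ω).1) hY.aemeasurable
        (fun t _ => (continuous_const.mul continuous_id).intervalIntegrable 0 t)
        (by filter_upwards [ae_restrict_mem measurableSet_Ioi] with t ht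
            rw [Set.mem_Ioi] at ht
            show (0:ℝ) ≤ 2 * t
            linarith)
      rw [← this]
      congr 1
      ext ω
      congr 1
      rw [intervalIntegral.integral_const_mul]
      simp [integral_id]
      ring
    rw [hlayer]
    have hsplit : Set.Ioi (0:ℝ) = Set.Ioc 0 1 ∪ Set.Ioi 1 := by
      rw [Set.Ioc_union_Ioi_eq_Ioi]; norm_num
    rw [hsplit, lintegral_union measurableSet_Ioi (Set.Ioc_disjoint_Ioi le_rfl)]
    have h2 : ∫⁻ t in Set.Ioi (1:ℝ), μ {a | t ≤ Y a} * ENNReal.ofReal (2 * t) = 0 := by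
      rw [setLIntegral_congr_fun measurableSet_Ioi
        (fun t (ht : 1 < t) => ?_), lintegral_zero]
      have : {a | t ≤ Y a} = ∅ := by
        ext a
        simp only [Set.mem_setOf_eq, Set.mem_empty_iff_false, iff_false, not_le]
        exact lt_of_le_of_lt (hrange a).2 ht
      simp [this]
    have h1 : ∫⁻ t in Set.Ioc (0:ℝ) 1, μ {a | t ≤ Y a} * ENNReal.ofReal (2 * t)
        ≤ ENNReal.ofReal (2 * v) := by
      calc ∫⁻ t in Set.Ioc (0:ℝ) 1, μ {a | t ≤ Y a} * ENNReal.ofReal (2 * t)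
          ≤ ∫⁻ _ in Set.Ioc (0:ℝ) 1, ENNReal.ofReal (2 * v) := by
            apply setLIntegral_mono measurable_const
            intro t ht
            have hb := hrev t ⟨ht.1.le, ht.2⟩
            have hne : μ {a | t ≤ Y a} ≠ ⊤ := measure_ne_top μ _
            rw [← ENNReal.ofReal_toReal hne, ← ENNReal.ofReal_mul (ENNReal.toReal_nonneg)]
            apply ENNReal.ofReal_le_ofReal
            nlinarith [ht.1.le]
        _ ≤ ENNReal.ofReal (2 * v) := by
            rw [setLIntegral_const]
            simp [Real.volume_Ioc]
    have := le_trans (add_le_add h1 h2.le) (by simp : ENNReal.ofReal (2*v) + 0 ≤ ENNReal.ofReal (2*v))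
    exact ENNReal.toReal_le_of_le_ofReal (by nlinarith [hv.1]) this
  rw [variance_eq_sub hL2]
  have hEY : (0:ℝ) ≤ (∫ ω, Y ω ∂μ) ^ 2 := sq_nonneg _
  have : μ[Y ^ 2] = ∫ ω, (Y ω) ^ 2 ∂μ := by simp [Pi.pow_apply]
  linarith [hsq, this ▸ hsq]
end

section
/- Let p_1,...,p_n and r_1,...,r_n be real numbers with 0 ≤ p_i ≤ r_i for all i and Σ r_i = 1. Let τ = Σ p_i(1 - r_i). Then ∏_{i=1}^n (1 - p_i) + Σ_{i=1}^n p_i ∏_{j ≠ i} (1 - p_j) ≤ (5/4 + τ) / e^τ. -/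
open Finset

lemma atMostOne_le_one {ι : Type*} [DecidableEq ι] (p : ι → ℝ)
    (hp : ∀ i, 0 ≤ p i) (hp1 : ∀ i, p i ≤ 1) (S : Finset ι) :
    (∏ i ∈ S, (1 - p i)) + ∑ i ∈ S, p i * ∏ j ∈ S.erase i, (1 - p j) ≤ 1 := by
  induction S using Finset.induction with
  | empty => simp
  | @insert a S ha ih =>
    have hA0 : 0 ≤ ∏ i ∈ S, (1 - p i) := prod_nonneg fun i _ => by linarith [hp1 i]
    have hA1 : ∏ i ∈ S, (1 - p i) ≤ 1 :=
      prod_le_one (fun i _ => by linarith [hp1 i]) (fun i _ => by linarith [hp i])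
    have hB0 : 0 ≤ ∑ i ∈ S, p i * ∏ j ∈ S.erase i, (1 - p j) :=
      sum_nonneg fun i _ => mul_nonneg (hp i)
        (prod_nonneg fun j _ => by linarith [hp1 j])
    rw [prod_insert ha, sum_insert ha, erase_insert ha]
    have hrw : ∀ i ∈ S, p i * ∏ j ∈ (insert a S).erase i, (1 - p j)
        = (1 - p a) * (p i * ∏ j ∈ S.erase i, (1 - p j)) := by
      intro i hi
      have hai : a ≠ i := fun h => ha (h ▸ hi)
      rw [Finset.erase_insert_of_ne hai, prod_insert (fun h => ha (Finset.mem_of_mem_erase h))]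
      ring
    rw [Finset.sum_congr rfl hrw, ← Finset.mul_sum]
    nlinarith [hp a, hp1 a]

theorem stmt_8 (n : ℕ) (p r : Fin n → ℝ)
    (hp : ∀ i, 0 ≤ p i) (hpr : ∀ i, p i ≤ r i) (hr : ∑ i, r i = 1)
    (τ : ℝ) (hτ : τ = ∑ i, p i * (1 - r i)) :
    (∏ i, (1 - p i)) + ∑ i, p i * ∏ j ∈ univ.erase i, (1 - p j) ≤
      (5 / 4 + τ) / Real.exp τ := by
  have hr0 : ∀ i, 0 ≤ r i := fun i => (hp i).trans (hpr i)
  have hr1 : ∀ i, r i ≤ 1 := fun i => by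
    calc r i ≤ ∑ j, r j := Finset.single_le_sum (fun j _ => hr0 j) (mem_univ i)
    _ = 1 := hr
  have hp1 : ∀ i, p i ≤ 1 := fun i => (hpr i).trans (hr1 i)
  set s := ∑ i, p i with hs
  set t := ∑ i, p i * r i with ht
  have hτst : τ = s - t := by
    rw [hτ, hs, ht, ← Finset.sum_sub_distrib]
    exact Finset.sum_congr rfl fun i _ => by ring
  have ht0 : 0 ≤ t := sum_nonneg fun i _ => mul_nonneg (hp i) (hr0 i)
  have hτ0 : 0 ≤ τ := hτ ▸ sum_nonneg fun i _ =>
    mul_nonneg (hp i) (by linarith [hr1 i])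
  have hs1 : s ≤ 1 := hr ▸ Finset.sum_le_sum fun i _ => hpr i
  have hexpτ : 0 < Real.exp τ := Real.exp_pos τ
  rcases le_or_gt τ (29/50) with hcase | hcase
  · -- small τ : LHS ≤ 1 ≤ RHS
    have h1 := atMostOne_le_one p hp hp1 univ
    have h2 : Real.exp τ ≤ 5/4 + τ := by
      have hb := Real.exp_bound' hτ0 (le_trans hcase (by norm_num)) (n := 4) (by norm_num)
      simp only [Finset.sum_range_succ, Finset.sum_range_zero] at hb
      norm_num [Nat.factorial] at hb
      nlinarith [mul_nonneg (by linarith : (0:ℝ) ≤ 29/50 - τ) hτ0,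
        mul_nonneg (mul_nonneg (by linarith : (0:ℝ) ≤ 29/50 - τ) hτ0) hτ0,
        mul_nonneg (mul_nonneg (mul_nonneg (by linarith : (0:ℝ) ≤ 29/50 - τ) hτ0) hτ0) hτ0,
        sq_nonneg τ, mul_nonneg hτ0 hτ0]
    rw [le_div_iff₀ hexpτ]
    nlinarith [hexpτ.le]
  · -- large τ
    set q := ∑ i, (p i)^2 with hq
    have hq0 : 0 ≤ q := sum_nonneg fun i _ => sq_nonneg _
    have hqt : q ≤ t := Finset.sum_le_sum fun i _ => by
      have := hpr i; have := hp i; nlinarith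
    -- product bound
    have hprod : ∏ i, (1 - p i) ≤ Real.exp (-s) := by
      calc ∏ i, (1 - p i) ≤ ∏ i, Real.exp (-p i) :=
            Finset.prod_le_prod (fun i _ => by linarith [hp1 i])
              (fun i _ => by linarith [Real.add_one_le_exp (-(p i))])
      _ = Real.exp (-s) := by
            rw [← Real.exp_sum, hs, ← Finset.sum_neg_distrib]
    have hE : Real.exp 1 < 2.7182818286 := Real.exp_one_lt_d9
    have hE1 : (1:ℝ) < Real.exp 1 := by
      have := Real.add_one_le_exp (1:ℝ); linarith
    -- per-term bound
    have hterm : ∀ i, p i * ∏ j ∈ univ.erase i, (1 - p j)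
        ≤ p i * (1 + (Real.exp 1 - 1) * p i) * Real.exp (-s) := by
      intro i
      have h1 : ∏ j ∈ univ.erase i, (1 - p j) ≤ Real.exp (p i - s) := by
        calc ∏ j ∈ univ.erase i, (1 - p j) ≤ ∏ j ∈ univ.erase i, Real.exp (-p j) :=
              Finset.prod_le_prod (fun j _ => by linarith [hp1 j])
                (fun j _ => by linarith [Real.add_one_le_exp (-(p j))])
        _ = Real.exp (p i - s) := by
              rw [← Real.exp_sum]
              congr 1
              rw [Finset.sum_neg_distrib, Finset.sum_erase_eq_sub (mem_univ i), ← hs]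
              ring
      have h2 : Real.exp (p i) ≤ 1 + (Real.exp 1 - 1) * p i := by
        have hcvx := convexOn_exp.2 (Set.mem_univ (0:ℝ)) (Set.mem_univ (1:ℝ))
          (by linarith [hp1 i] : (0:ℝ) ≤ 1 - p i) (hp i) (by ring)
        simp only [smul_eq_mul, mul_zero, mul_one, zero_add, Real.exp_zero] at hcvx
        linarith
      have h3 : Real.exp (p i - s) = Real.exp (p i) * Real.exp (-s) := by
        rw [← Real.exp_add]; ring_nf
      calc p i * ∏ j ∈ univ.erase i, (1 - p j) ≤ p i * Real.exp (p i - s) :=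
            mul_le_mul_of_nonneg_left h1 (hp i)
      _ = p i * Real.exp (p i) * Real.exp (-s) := by rw [h3]; ring
      _ ≤ p i * (1 + (Real.exp 1 - 1) * p i) * Real.exp (-s) := by
            apply mul_le_mul_of_nonneg_right _ (Real.exp_pos _).le
            exact mul_le_mul_of_nonneg_left h2 (hp i)
    have hsum : ∑ i, p i * ∏ j ∈ univ.erase i, (1 - p j)
        ≤ (s + (Real.exp 1 - 1) * q) * Real.exp (-s) := by
      calc ∑ i, p i * ∏ j ∈ univ.erase i, (1 - p j)
          ≤ ∑ i, p i * (1 + (Real.exp 1 - 1) * p i) * Real.exp (-s) :=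
            Finset.sum_le_sum fun i _ => hterm i
      _ = (s + (Real.exp 1 - 1) * q) * Real.exp (-s) := by
            rw [← Finset.sum_mul, hs, hq, Finset.mul_sum, ← Finset.sum_add_distrib]
            congr 1
            exact Finset.sum_congr rfl fun i _ => by ring
    -- key analytic inequality
    have hexp_t : 1 + t + t^2/2 ≤ Real.exp t := by
      have hb := Real.sum_le_exp_of_nonneg ht0 3
      simp only [Finset.sum_range_succ, Finset.sum_range_zero] at hb
      norm_num at hb
      linarith
    have hkey : 1 + s + (Real.exp 1 - 1) * q ≤ (5/4 + τ) * Real.exp t := by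
      have h4 : (Real.exp 1 - 1) * q ≤ 1.7182818286 * t := by
        nlinarith [hq0, hqt]
      have h5 : (5/4 + τ) * (1 + t + t^2/2) ≤ (5/4 + τ) * Real.exp t :=
        mul_le_mul_of_nonneg_left hexp_t (by linarith)
      have h6 : 1 + s + 1.7182818286 * t ≤ (5/4 + τ) * (1 + t + t^2/2) := by
        have hst : s = τ + t := by linarith [hτst]
        rw [hst]
        nlinarith [mul_nonneg (by linarith : (0:ℝ) ≤ τ - 29/50) ht0,
          mul_nonneg (by linarith : (0:ℝ) ≤ τ - 29/50) (sq_nonneg t),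
          sq_nonneg t, sq_nonneg (t - 1/2), ht0, hs1]
      linarith
    -- assemble
    have hexps : Real.exp (-s) = Real.exp (-τ) * Real.exp (-t) := by
      rw [← Real.exp_add, hτst]; ring_nf
    have hfinal : (1 + s + (Real.exp 1 - 1) * q) * Real.exp (-s) ≤ (5/4 + τ) / Real.exp τ := by
      have h8 : (5/4 + τ) / Real.exp τ = (5/4 + τ) * Real.exp (-τ) := by
        rw [Real.exp_neg, div_eq_mul_inv]
      have hexptt : Real.exp t * Real.exp (-t) = 1 := by rw [← Real.exp_add]; simp
      have h7 : (1 + s + (Real.exp 1 - 1) * q) * Real.exp (-t) ≤ 5/4 + τ := by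
        have h9 := mul_le_mul_of_nonneg_right hkey (Real.exp_pos (-t)).le
        rwa [mul_assoc, hexptt, mul_one] at h9
      rw [h8, hexps]
      calc (1 + s + (Real.exp 1 - 1) * q) * (Real.exp (-τ) * Real.exp (-t))
          = ((1 + s + (Real.exp 1 - 1) * q) * Real.exp (-t)) * Real.exp (-τ) := by ring
      _ ≤ (5/4 + τ) * Real.exp (-τ) :=
            mul_le_mul_of_nonneg_right h7 (Real.exp_pos _).le
    calc (∏ i, (1 - p i)) + ∑ i, p i * ∏ j ∈ univ.erase i, (1 - p j)
        ≤ Real.exp (-s) + (s + (Real.exp 1 - 1) * q) * Real.exp (-s) := by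
          linarith [hprod, hsum]
    _ = (1 + s + (Real.exp 1 - 1) * q) * Real.exp (-s) := by ring
    _ ≤ (5/4 + τ) / Real.exp τ := hfinal
end

section
/- Let p_1,...,p_n and r_1,...,r_n be real numbers with 0 ≤ p_i < 1, p_i ≤ r_i for all i, and Σ r_i = 1. Then Σ_{i=1}^n p_i²(1-r_i)²/(1-p_i) - Σ_{i≠j} p_i(1-r_i)·p_j r_j/(1-p_j) ≤ 1/4. -/
open Finset

theorem stmt_9 (n : ℕ) (p r : Fin n → ℝ)
    (hp0 : ∀ i, 0 ≤ p i) (hp1 : ∀ i, p i < 1) (hpr : ∀ i, p i ≤ r i)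
    (hr : ∑ i, r i = 1) :
    (∑ i, (p i) ^ 2 * (1 - r i) ^ 2 / (1 - p i)) -
        (∑ i, ∑ j ∈ univ.erase i, p i * (1 - r i) * (p j * r j / (1 - p j))) ≤ 1 / 4 := by
  have hr0 : ∀ i, 0 ≤ r i := fun i => le_trans (hp0 i) (hpr i)
  have hr1 : ∀ i : Fin n, r i ≤ 1 := by
    intro i
    have h := Finset.single_le_sum (f := r) (fun j _ => hr0 j) (mem_univ i)
    linarith
  have hcross : 0 ≤ ∑ i, ∑ j ∈ univ.erase i, p i * (1 - r i) * (p j * r j / (1 - p j)) := by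
    refine Finset.sum_nonneg fun i _ => Finset.sum_nonneg fun j _ => ?_
    have h1 : (0:ℝ) < 1 - p j := by linarith [hp1 j]
    have h2 : (0:ℝ) ≤ 1 - r i := by linarith [hr1 i]
    exact mul_nonneg (mul_nonneg (hp0 i) h2)
      (div_nonneg (mul_nonneg (hp0 j) (hr0 j)) h1.le)
  have hmain : (∑ i, (p i) ^ 2 * (1 - r i) ^ 2 / (1 - p i)) ≤ 1 / 4 := by
    have hterm : ∀ i : Fin n, (p i) ^ 2 * (1 - r i) ^ 2 / (1 - p i) ≤ p i / 4 := by
      intro i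
      have h1 : (0:ℝ) < 1 - p i := by linarith [hp1 i]
      rw [div_le_iff₀ h1]
      nlinarith [hp0 i, hp1 i, hpr i, hr1 i, sq_nonneg (p i - r i),
        mul_nonneg (hp0 i) (mul_nonneg (sub_nonneg.2 (hpr i)) (sub_nonneg.2 (hr1 i))),
        sq_nonneg (1 - 2 * p i), mul_nonneg (hp0 i) (sq_nonneg (1 - 2 * p i))]
    calc (∑ i, (p i) ^ 2 * (1 - r i) ^ 2 / (1 - p i)) ≤ ∑ i, p i / 4 :=
          Finset.sum_le_sum fun i _ => hterm i
      _ ≤ ∑ i, r i / 4 := Finset.sum_le_sum fun i _ => by linarith [hpr i]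
      _ = 1 / 4 := by rw [← Finset.sum_div, hr]
  linarith
end

section
/- Let Y₁, Y₂ be i.i.d. random variables with the distribution P[Y ≥ y] = 1 for y = 0, ρ for 0 < y ≤ 1, and ρ/y for 1 ≤ y ≤ 2 (so mass 1-ρ at 0, density ρ/y² on [1,2), and mass ρ/2 at 2). Then for a bundle price z ∈ [1,2], z·P[Y₁ + Y₂ ≥ z] = 2ρ + (z-2)ρ², which is maximized over [1,2] at z = 2 with value 2ρ. -/
open MeasureTheory ProbabilityTheory

lemma tail_aux {Ω : Type*} [MeasurableSpace Ω] {μ : Measure Ω} [IsProbabilityMeasure μ]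
    {Y : Ω → ℝ} (hY : Measurable Y) {ρ : ℝ}
    (h0 : ∀ y : ℝ, y ≤ 0 → (μ {ω | y ≤ Y ω}).toReal = 1)
    (h1 : ∀ y : ℝ, 0 < y → y ≤ 1 → (μ {ω | y ≤ Y ω}).toReal = ρ) :
    μ {ω | ¬(Y ω = 0 ∨ 1 ≤ Y ω)} = 0 := by
  have hval : ∀ y : ℝ, μ {ω | y ≤ Y ω} = ENNReal.ofReal ((μ {ω | y ≤ Y ω}).toReal) := by
    intro y; rw [ENNReal.ofReal_toReal (measure_ne_top μ _)]
  have hneg : μ {ω | Y ω < 0} = 0 := by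
    have hsub : {ω | Y ω < 0} ⊆ ⋃ n : ℕ, {ω | -(1/(n+1:ℝ)) ≤ Y ω}ᶜ := by
      intro ω hω
      simp only [Set.mem_setOf_eq] at hω
      obtain ⟨n, hn⟩ := exists_nat_one_div_lt (neg_pos.mpr hω)
      exact Set.mem_iUnion.mpr ⟨n, by simp only [Set.mem_compl_iff, Set.mem_setOf_eq, not_le]; linarith⟩
    refine measure_mono_null hsub (measure_iUnion_null fun n => ?_)
    have hm : MeasurableSet {ω | -(1/(n+1:ℝ)) ≤ Y ω} := hY measurableSet_Ici
    rw [prob_compl_eq_one_sub hm, hval, h0 _ (neg_nonpos.mpr (by positivity))]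
    simp
  have hmid : μ {ω | 0 < Y ω ∧ Y ω < 1} = 0 := by
    have hsub : {ω | 0 < Y ω ∧ Y ω < 1} ⊆
        ⋃ n : ℕ, {ω | 1/(n+1:ℝ) ≤ Y ω} \ {ω | (1:ℝ) ≤ Y ω} := by
      intro ω hω
      simp only [Set.mem_setOf_eq] at hω
      obtain ⟨n, hn⟩ := exists_nat_one_div_lt hω.1
      exact Set.mem_iUnion.mpr ⟨n, ⟨le_of_lt hn, by simp only [Set.mem_setOf_eq, not_le]; exact hω.2⟩⟩
    refine measure_mono_null hsub (measure_iUnion_null fun n => ?_)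
    have hle : {ω | (1:ℝ) ≤ Y ω} ⊆ {ω | 1/(n+1:ℝ) ≤ Y ω} := by
      intro ω hω
      have h1n : 1/(n+1:ℝ) ≤ 1 := by
        rw [div_le_one (by positivity)]; linarith [Nat.cast_nonneg (α := ℝ) n]
      exact le_trans h1n hω
    rw [measure_diff hle (hY measurableSet_Ici).nullMeasurableSet (measure_ne_top μ _)]
    have e1 : μ {ω | 1/(n+1:ℝ) ≤ Y ω} = ENNReal.ofReal ρ := by
      rw [hval, h1 _ (by positivity) (by
        rw [div_le_one (by positivity)]; linarith [Nat.cast_nonneg (α := ℝ) n])]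
    have e2 : μ {ω | (1:ℝ) ≤ Y ω} = ENNReal.ofReal ρ := by
      rw [hval, h1 1 one_pos le_rfl]
    rw [e1, e2, tsub_self]
  refine measure_mono_null ?_ (measure_union_null hneg hmid)
  intro ω hω
  simp only [Set.mem_setOf_eq, not_or, not_le] at hω
  rcases lt_trichotomy (Y ω) 0 with h | h | h
  · exact Or.inl h
  · exact absurd h hω.1
  · exact Or.inr ⟨h, hω.2⟩

theorem stmt_15 {Ω : Type*} [MeasurableSpace Ω] {μ : Measure Ω} [IsProbabilityMeasure μ]
    (Y₁ Y₂ : Ω → ℝ) (hY₁ : Measurable Y₁) (hY₂ : Measurable Y₂)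
    (hindep : IndepFun Y₁ Y₂ μ)
    (ρ : ℝ) (hρ0 : 0 < ρ) (hρ1 : ρ < 1)
    (htail : ∀ Y ∈ ({Y₁, Y₂} : Set (Ω → ℝ)),
      (∀ y : ℝ, y ≤ 0 → (μ {ω | y ≤ Y ω}).toReal = 1) ∧
      (∀ y : ℝ, 0 < y → y ≤ 1 → (μ {ω | y ≤ Y ω}).toReal = ρ) ∧
      (∀ y : ℝ, 1 ≤ y → y ≤ 2 → (μ {ω | y ≤ Y ω}).toReal = ρ / y) ∧
      (∀ y : ℝ, 2 < y → (μ {ω | y ≤ Y ω}).toReal = 0)) :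
    (∀ z ∈ Set.Icc (1 : ℝ) 2,
        z * (μ {ω | z ≤ Y₁ ω + Y₂ ω}).toReal = 2 * ρ + (z - 2) * ρ ^ 2) ∧
      (∀ z ∈ Set.Icc (1 : ℝ) 2, z * (μ {ω | z ≤ Y₁ ω + Y₂ ω}).toReal ≤ 2 * ρ) ∧
      (2 : ℝ) * (μ {ω | (2 : ℝ) ≤ Y₁ ω + Y₂ ω}).toReal = 2 * ρ := by
  obtain ⟨h10, h11, h12, h13⟩ := htail Y₁ (Or.inl rfl)
  obtain ⟨h20, h21, h22, h23⟩ := htail Y₂ (Or.inr rfl)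
  have hnull1 := tail_aux hY₁ h10 h11
  have hnull2 := tail_aux hY₂ h20 h21
  have key : ∀ z ∈ Set.Icc (1 : ℝ) 2,
      z * (μ {ω | z ≤ Y₁ ω + Y₂ ω}).toReal = 2 * ρ + (z - 2) * ρ ^ 2 := by
    intro z hz
    obtain ⟨hz1, hz2⟩ := hz
    set E1 : Set Ω := Y₁ ⁻¹' Set.Ici 1 ∩ Y₂ ⁻¹' Set.Ici 1 with hE1
    set E2 : Set Ω := Y₁ ⁻¹' Set.Iio 1 ∩ Y₂ ⁻¹' Set.Ici z with hE2
    set E3 : Set Ω := Y₁ ⁻¹' Set.Ici z ∩ Y₂ ⁻¹' Set.Iio 1 with hE3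
    -- a.e. equality
    have hae : ({ω | z ≤ Y₁ ω + Y₂ ω} : Set Ω) =ᵐ[μ] (E1 ∪ E2 ∪ E3 : Set Ω) := by
      rw [Filter.eventuallyEq_set]
      have g1 : ∀ᵐ ω ∂μ, Y₁ ω = 0 ∨ 1 ≤ Y₁ ω := by
        rw [MeasureTheory.ae_iff]; exact hnull1
      have g2 : ∀ᵐ ω ∂μ, Y₂ ω = 0 ∨ 1 ≤ Y₂ ω := by
        rw [MeasureTheory.ae_iff]; exact hnull2
      filter_upwards [g1, g2] with ω h1 h2
      simp only [Set.mem_setOf_eq, Set.mem_union, Set.mem_inter_iff, Set.mem_preimage,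
        Set.mem_Ici, Set.mem_Iio, hE1, hE2, hE3]
      rcases h1 with h1 | h1 <;> rcases h2 with h2 | h2
      · rw [h1, h2]; constructor
        · intro h; linarith
        · rintro ((⟨a, b⟩ | ⟨a, b⟩) | ⟨a, b⟩) <;> linarith
      · rw [h1]; constructor
        · intro h; exact Or.inl (Or.inr ⟨by norm_num, by linarith⟩)
        · rintro ((⟨a, b⟩ | ⟨a, b⟩) | ⟨a, b⟩) <;> linarith
      · rw [h2]; constructor
        · intro h; exact Or.inr ⟨by linarith, by norm_num⟩
        · rintro ((⟨a, b⟩ | ⟨a, b⟩) | ⟨a, b⟩) <;> linarith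
      · constructor
        · intro h; exact Or.inl (Or.inl ⟨h1, h2⟩)
        · intro h; linarith
    have hμeq : μ {ω | z ≤ Y₁ ω + Y₂ ω} = μ (E1 ∪ E2 ∪ E3) := measure_congr hae
    -- disjointness
    have d12 : Disjoint E1 E2 := by
      refine Set.disjoint_left.mpr fun ω h1 h2 => ?_
      have a := h1.1; have b := h2.1
      simp only [Set.mem_preimage, Set.mem_Ici, Set.mem_Iio] at a b
      linarith
    have d13 : Disjoint (E1 ∪ E2) E3 := by
      refine Set.disjoint_left.mpr fun ω h1 h3 => ?_
      have c := h3.1; have d := h3.2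
      simp only [Set.mem_preimage, Set.mem_Ici, Set.mem_Iio] at c d
      rcases h1 with h1 | h2
      · have b := h1.2; simp only [Set.mem_preimage, Set.mem_Ici] at b; linarith
      · have a := h2.1; simp only [Set.mem_preimage, Set.mem_Iio] at a; linarith
    have m2 : MeasurableSet E2 := (hY₁ measurableSet_Iio).inter (hY₂ measurableSet_Ici)
    have m3 : MeasurableSet E3 := (hY₁ measurableSet_Ici).inter (hY₂ measurableSet_Iio)
    have hadd : μ (E1 ∪ E2 ∪ E3) = μ E1 + μ E2 + μ E3 := by
      rw [measure_union d13 m3, measure_union d12 m2]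
    have hzpos : (0:ℝ) < z := by linarith
    -- measure values in preimage form
    have hA1 : (μ (Y₁ ⁻¹' Set.Ici (1:ℝ))).toReal = ρ := by
      have h := h12 1 le_rfl (by norm_num); rw [div_one] at h; exact h
    have hA2 : (μ (Y₂ ⁻¹' Set.Ici (1:ℝ))).toReal = ρ := by
      have h := h22 1 le_rfl (by norm_num); rw [div_one] at h; exact h
    have hAz1 : (μ (Y₁ ⁻¹' Set.Ici z)).toReal = ρ / z := h12 z hz1 hz2
    have hAz2 : (μ (Y₂ ⁻¹' Set.Ici z)).toReal = ρ / z := h22 z hz1 hz2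
    have hB1 : (μ (Y₁ ⁻¹' Set.Iio (1:ℝ))).toReal = 1 - ρ := by
      have hc : Y₁ ⁻¹' Set.Iio (1:ℝ) = (Y₁ ⁻¹' Set.Ici 1)ᶜ := by
        ext ω; simp [not_le]
      rw [hc, prob_compl_eq_one_sub (hY₁ measurableSet_Ici),
        ENNReal.toReal_sub_of_le prob_le_one ENNReal.one_ne_top, ENNReal.toReal_one, hA1]
    have hB2 : (μ (Y₂ ⁻¹' Set.Iio (1:ℝ))).toReal = 1 - ρ := by
      have hc : Y₂ ⁻¹' Set.Iio (1:ℝ) = (Y₂ ⁻¹' Set.Ici 1)ᶜ := by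
        ext ω; simp [not_le]
      rw [hc, prob_compl_eq_one_sub (hY₂ measurableSet_Ici),
        ENNReal.toReal_sub_of_le prob_le_one ENNReal.one_ne_top, ENNReal.toReal_one, hA2]
    have e1 : (μ E1).toReal = ρ * ρ := by
      rw [hE1, hindep.measure_inter_preimage_eq_mul _ _ measurableSet_Ici measurableSet_Ici,
        ENNReal.toReal_mul, hA1, hA2]
    have e2 : (μ E2).toReal = (1 - ρ) * (ρ / z) := by
      rw [hE2, hindep.measure_inter_preimage_eq_mul _ _ measurableSet_Iio measurableSet_Ici,
        ENNReal.toReal_mul, hB1, hAz2]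
    have e3 : (μ E3).toReal = (ρ / z) * (1 - ρ) := by
      rw [hE3, hindep.measure_inter_preimage_eq_mul _ _ measurableSet_Ici measurableSet_Iio,
        ENNReal.toReal_mul, hAz1, hB2]
    have etot : (μ {ω | z ≤ Y₁ ω + Y₂ ω}).toReal
        = ρ * ρ + (1 - ρ) * (ρ / z) + (ρ / z) * (1 - ρ) := by
      rw [hμeq, hadd, ENNReal.toReal_add (by finiteness) (measure_ne_top μ _),
        ENNReal.toReal_add (measure_ne_top μ _) (measure_ne_top μ _), e1, e2, e3]
    rw [etot]
    field_simp
    ring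
  refine ⟨key, fun z hz => ?_, ?_⟩
  · rw [key z hz]
    have hz2 := hz.2
    nlinarith [sq_nonneg ρ]
  · have h2 := key 2 ⟨by norm_num, le_rfl⟩
    simpa using h2
end

section
/- Let Y₁, Y₂ be i.i.d. with mass 1-ρ at 0, density ρ/y² on [1,2), and mass ρ/2 at 2. Then for z ∈ (2,3], z·P[Y₁ + Y₂ ≥ z] = 2ρ²·(ln(z-1)/z + 1), which is strictly increasing in z on (2,3] and at z = 3 equals 2ρ²(1 + (ln 2)/3). -/
open MeasureTheory ProbabilityTheory Set

noncomputable def auxDen (ρ : ℝ) : Measure ℝ :=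
  MeasureTheory.volume.withDensity ((Set.Ico (1:ℝ) 2).indicator fun y => ENNReal.ofReal (ρ / y^2))

noncomputable def auxNu (ρ : ℝ) : Measure ℝ :=
  ENNReal.ofReal (1-ρ) • Measure.dirac 0 + ENNReal.ofReal (ρ/2) • Measure.dirac 2 + auxDen ρ

noncomputable def auxG (ρ y : ℝ) : ℝ :=
  if y ≤ 0 then 1 else if y ≤ 1 then ρ else if y ≤ 2 then ρ / y else 0

lemma integral_rho_sq (ρ : ℝ) {a : ℝ} (ha : 0 < a) (ha2 : a ≤ 2) :
    ∫ x in Set.Ico a 2, ρ / x^2 = ρ/a - ρ/2 := by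
  rw [MeasureTheory.integral_Ico_eq_integral_Ioo, ← MeasureTheory.integral_Ioc_eq_integral_Ioo, ← intervalIntegral.integral_of_le ha2]
  have : ∀ x, ρ / x^2 = ρ * x ^ (-2 : ℤ) := by
    intro x; rw [zpow_neg]; rw [div_eq_mul_inv]; norm_num
  simp_rw [this]
  rw [intervalIntegral.integral_const_mul, integral_zpow]
  · norm_num
    field_simp
    ring
  · right
    constructor
    · norm_num
    · rw [Set.uIcc_of_le ha2]
      intro h
      exact absurd (h.1) (by linarith)

lemma auxDen_Ici (ρ : ℝ) (hρ0 : 0 ≤ ρ) {a : ℝ} (ha : 1 ≤ a) (ha2 : a ≤ 2) :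
    auxDen ρ (Set.Ici a) = ENNReal.ofReal (ρ/a - ρ/2) := by
  rw [auxDen, withDensity_apply _ measurableSet_Ici]
  rw [lintegral_indicator measurableSet_Ico _, Measure.restrict_restrict measurableSet_Ico]
  have hset : Set.Ico (1:ℝ) 2 ∩ Set.Ici a = Set.Ico a 2 := by
    ext x; simp only [Set.mem_inter_iff, Set.mem_Ico, Set.mem_Ici]
    constructor
    · rintro ⟨⟨_, h2⟩, h3⟩; exact ⟨h3, h2⟩
    · rintro ⟨h1, h2⟩; exact ⟨⟨le_trans ha h1, h2⟩, h1⟩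
  rw [hset, ← ofReal_integral_eq_lintegral_ofReal, integral_rho_sq ρ (by linarith) ha2]
  · exact ((continuousOn_const.div (continuousOn_pow 2) (fun x hx => by
      have : (0:ℝ) < x := lt_of_lt_of_le (by linarith) hx.1
      positivity)).integrableOn_Icc).mono_set Set.Ico_subset_Icc_self
  · filter_upwards with x using by positivity

lemma auxDen_Ici_small (ρ : ℝ) (hρ0 : 0 ≤ ρ) {a : ℝ} (ha : a ≤ 1) :
    auxDen ρ (Set.Ici a) = ENNReal.ofReal (ρ/2) := by
  rw [auxDen, withDensity_apply _ measurableSet_Ici]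
  rw [lintegral_indicator measurableSet_Ico _, Measure.restrict_restrict measurableSet_Ico]
  have hset : Set.Ico (1:ℝ) 2 ∩ Set.Ici a = Set.Ico 1 2 := by
    apply Set.inter_eq_left.2
    intro x hx; exact le_trans ha hx.1
  rw [hset, ← ofReal_integral_eq_lintegral_ofReal, integral_rho_sq ρ one_pos (by norm_num)]
  · congr 1; ring
  · exact ((continuousOn_const.div (continuousOn_pow 2) (fun x hx => by
      have : (0:ℝ) < x := lt_of_lt_of_le one_pos hx.1
      positivity)).integrableOn_Icc).mono_set Set.Ico_subset_Icc_self
  · filter_upwards with x using by positivity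

lemma auxDen_Ici_big (ρ : ℝ) {a : ℝ} (ha : 2 ≤ a) : auxDen ρ (Set.Ici a) = 0 := by
  rw [auxDen, withDensity_apply _ measurableSet_Ici]
  rw [lintegral_indicator measurableSet_Ico _, Measure.restrict_restrict measurableSet_Ico]
  have hset : Set.Ico (1:ℝ) 2 ∩ Set.Ici a = ∅ := by
    ext x; simp only [Set.mem_inter_iff, Set.mem_Ico, Set.mem_Ici, Set.mem_empty_iff_false,
      iff_false, not_and]
    rintro ⟨_, h2⟩ h3; linarith
  rw [hset]
  simp

lemma auxNu_Ici (ρ : ℝ) (hρ0 : 0 ≤ ρ) (hρ1 : ρ ≤ 1) (a : ℝ) :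
    auxNu ρ (Set.Ici a) = ENNReal.ofReal (auxG ρ a) := by
  have hd0 : Measure.dirac (0:ℝ) (Set.Ici a) = if (0:ℝ) ∈ Set.Ici a then 1 else 0 := by
    rw [Measure.dirac_apply' _ measurableSet_Ici]; simp [Set.indicator]
  have hd2 : Measure.dirac (2:ℝ) (Set.Ici a) = if (2:ℝ) ∈ Set.Ici a then 1 else 0 := by
    rw [Measure.dirac_apply' _ measurableSet_Ici]; simp [Set.indicator]
  rw [auxNu, Measure.add_apply, Measure.add_apply, Measure.smul_apply, Measure.smul_apply,
    hd0, hd2, smul_eq_mul, smul_eq_mul, auxG]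
  rcases le_or_gt a 0 with h0 | h0
  · rw [if_pos h0, if_pos (by exact h0 : (0:ℝ) ∈ Set.Ici a),
      if_pos (by exact le_trans h0 (by norm_num) : (2:ℝ) ∈ Set.Ici a),
      auxDen_Ici_small ρ hρ0 (le_trans h0 zero_le_one)]
    rw [mul_one, mul_one, ← ENNReal.ofReal_add (by linarith) (by linarith),
      ← ENNReal.ofReal_add (by linarith) (by linarith)]
    congr 1; ring
  · rw [if_neg (by simpa using h0 : ¬ (0:ℝ) ∈ Set.Ici a), mul_zero, zero_add,
      if_neg (not_le.2 h0)]
    rcases le_or_gt a 1 with h1 | h1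
    · rw [if_pos h1, if_pos (by exact le_trans h1 (by norm_num) : (2:ℝ) ∈ Set.Ici a),
        auxDen_Ici_small ρ hρ0 h1, mul_one,
        ← ENNReal.ofReal_add (by linarith) (by linarith)]
      norm_num
    · rw [if_neg (not_le.2 h1)]
      rcases le_or_gt a 2 with h2 | h2
      · rw [if_pos h2, if_pos (by exact h2 : (2:ℝ) ∈ Set.Ici a), mul_one,
          auxDen_Ici ρ hρ0 h1.le h2,
          ← ENNReal.ofReal_add (by linarith) (by
            have : ρ/a ≥ ρ/2 := by
              apply div_le_div_of_nonneg_left hρ0 (by linarith) h2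
            rw [sub_nonneg]
            apply div_le_div_of_nonneg_left hρ0 (by linarith) h2)]
        · congr 1; ring
      · rw [if_neg (not_le.2 h2), if_neg (by simpa using h2 : ¬ (2:ℝ) ∈ Set.Ici a),
          mul_zero, zero_add, auxDen_Ici_big ρ h2.le]
        simp

lemma map_eq_auxNu {Ω : Type*} [MeasurableSpace Ω] {μ : Measure Ω} [IsProbabilityMeasure μ]
    {Y : Ω → ℝ} (hY : Measurable Y) {ρ : ℝ} (hρ0 : 0 < ρ) (hρ1 : ρ < 1)
    (h1 : ∀ y : ℝ, y ≤ 0 → (μ {ω | y ≤ Y ω}).toReal = 1)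
    (h2 : ∀ y : ℝ, 0 < y → y ≤ 1 → (μ {ω | y ≤ Y ω}).toReal = ρ)
    (h3 : ∀ y : ℝ, 1 ≤ y → y ≤ 2 → (μ {ω | y ≤ Y ω}).toReal = ρ / y)
    (h4 : ∀ y : ℝ, 2 < y → (μ {ω | y ≤ Y ω}).toReal = 0) :
    Measure.map Y μ = auxNu ρ := by
  have : IsProbabilityMeasure (Measure.map Y μ) := Measure.isProbabilityMeasure_map hY.aemeasurable
  apply Measure.ext_of_Ici
  intro a
  rw [Measure.map_apply hY measurableSet_Ici, auxNu_Ici ρ hρ0.le hρ1.le]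
  have hpre : Y ⁻¹' Set.Ici a = {ω | a ≤ Y ω} := rfl
  rw [hpre, ← ENNReal.ofReal_toReal (measure_ne_top μ _)]
  congr 1
  rw [auxG]
  rcases le_or_gt a 0 with h | h
  · rw [if_pos h]; exact h1 a h
  rw [if_neg (not_le.2 h)]
  rcases le_or_gt a 1 with ha | ha
  · rw [if_pos ha]; exact h2 a h ha
  rw [if_neg (not_le.2 ha)]
  rcases le_or_gt a 2 with hb | hb
  · rw [if_pos hb]; exact h3 a ha.le hb
  · rw [if_neg (not_le.2 hb)]; exact h4 a hb

lemma measurable_auxG (ρ : ℝ) : Measurable (auxG ρ) := by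
  unfold auxG
  apply Measurable.ite (measurableSet_le measurable_id measurable_const) measurable_const
  apply Measurable.ite (measurableSet_le measurable_id measurable_const) measurable_const
  apply Measurable.ite (measurableSet_le measurable_id measurable_const)
  · exact measurable_const.div measurable_id
  · exact measurable_const

lemma auxG_nonneg {ρ : ℝ} (hρ0 : 0 ≤ ρ) (y : ℝ) : 0 ≤ auxG ρ y := by
  unfold auxG
  split_ifs with h1 h2 h3
  · norm_num
  · exact hρ0
  · push_neg at h1; positivity
  · exact le_refl 0

lemma auxG_le_one {ρ : ℝ} (hρ0 : 0 ≤ ρ) (hρ1 : ρ ≤ 1) (y : ℝ) : auxG ρ y ≤ 1 := by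
  unfold auxG
  split_ifs with h1 h2 h3
  · exact le_refl 1
  · exact hρ1
  · push_neg at h1 h2
    calc ρ / y ≤ ρ / 1 := by
          apply div_le_div_of_nonneg_left hρ0 one_pos h2.le
      _ ≤ 1 := by simpa using hρ1
  · norm_num

instance (ρ : ℝ) : SFinite (auxNu ρ) := by
  unfold auxNu auxDen; infer_instance

lemma sum_tail {Ω : Type*} [MeasurableSpace Ω] {μ : Measure Ω} [IsProbabilityMeasure μ]
    {Y₁ Y₂ : Ω → ℝ} (hY₁ : Measurable Y₁) (hY₂ : Measurable Y₂)
    (hindep : IndepFun Y₁ Y₂ μ) {ρ : ℝ}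
    (hm1 : Measure.map Y₁ μ = auxNu ρ) (hm2 : Measure.map Y₂ μ = auxNu ρ) (z : ℝ) :
    μ {ω | z ≤ Y₁ ω + Y₂ ω} = ∫⁻ x, auxNu ρ (Set.Ici (z - x)) ∂(auxNu ρ) := by
  have hs : MeasurableSet {p : ℝ × ℝ | z ≤ p.1 + p.2} :=
    measurableSet_le measurable_const (measurable_fst.add measurable_snd)
  have hmap := (indepFun_iff_map_prod_eq_prod_map_map hY₁.aemeasurable hY₂.aemeasurable).1 hindep
  have : μ {ω | z ≤ Y₁ ω + Y₂ ω}
      = Measure.map (fun ω => (Y₁ ω, Y₂ ω)) μ {p : ℝ × ℝ | z ≤ p.1 + p.2} := by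
    rw [Measure.map_apply (hY₁.prodMk hY₂) hs]
    rfl
  rw [this, hmap, hm1, hm2, Measure.prod_apply hs]
  congr 1
  ext x
  congr 1
  ext y
  simp only [Set.mem_preimage, Set.mem_setOf_eq, Set.mem_Ici]
  constructor <;> intro h <;> linarith

lemma hasDerivAt_auxF (z : ℝ) {x : ℝ} (hx : 0 < x) (hxz : x < z) :
    HasDerivAt (fun x => (1/z)*((Real.log x - Real.log (z-x))/z - 1/x))
      (1/(x^2*(z-x))) x := by
  have hz : 0 < z := lt_trans hx hxz
  have hzx : (0:ℝ) < z - x := by linarith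
  have h1 : HasDerivAt Real.log x⁻¹ x := Real.hasDerivAt_log hx.ne'
  have h2 : HasDerivAt (fun x => Real.log (z - x)) ((z-x)⁻¹ * (-1)) x := by
    have hb : HasDerivAt (fun x : ℝ => z - x) (-1) x := by
      simpa using (hasDerivAt_id x).const_sub z
    exact (Real.hasDerivAt_log hzx.ne').comp x hb
  have h3 : HasDerivAt (fun x : ℝ => 1/x) (-(x^2)⁻¹) x := by
    simpa [one_div] using hasDerivAt_inv hx.ne'
  have : HasDerivAt (fun x => (1/z)*((Real.log x - Real.log (z-x))/z - 1/x))
      (1/z * ((x⁻¹ - (z - x)⁻¹ * -1) / z - -(x ^ 2)⁻¹)) x :=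
    (((h1.sub h2).div_const z).sub h3).const_mul (1/z)
  convert this using 1
  field_simp
  ring

lemma ftc1 (ρ : ℝ) {z : ℝ} (hz2 : 2 < z) (hz3 : z ≤ 3) :
    ∫ x in (1:ℝ)..(z-1), ρ/x^2 * (ρ/(z-x))
      = ρ^2 * (2*Real.log (z-1)/z^2 - 1/(z*(z-1)) + 1/z) := by
  have h1z : (1:ℝ) ≤ z - 1 := by linarith
  have huIcc : Set.uIcc (1:ℝ) (z-1) = Set.Icc 1 (z-1) := Set.uIcc_of_le h1z
  have hderiv : ∀ x ∈ Set.uIcc (1:ℝ) (z-1),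
      HasDerivAt (fun x => ρ^2 * ((1/z)*((Real.log x - Real.log (z-x))/z - 1/x)))
        (ρ^2 * (1/(x^2*(z-x)))) x := by
    intro x hx
    rw [huIcc] at hx
    exact (hasDerivAt_auxF z (by linarith [hx.1]) (by linarith [hx.2])).const_mul (ρ^2)
  have hint : IntervalIntegrable (fun x => ρ^2 * (1/(x^2*(z-x)))) MeasureTheory.volume 1 (z-1) := by
    apply ContinuousOn.intervalIntegrable
    rw [huIcc]
    apply continuousOn_const.mul
    apply continuousOn_const.div
    · exact (continuousOn_pow 2).mul (continuousOn_const.sub continuousOn_id)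
    · intro x hx
      have hx1 : (0:ℝ) < x := by linarith [hx.1]
      have hx2 : (0:ℝ) < z - x := by linarith [hx.2]
      positivity
  have key := intervalIntegral.integral_eq_sub_of_hasDerivAt hderiv hint
  have heq : ∀ x ∈ Set.uIcc (1:ℝ) (z-1), ρ/x^2 * (ρ/(z-x)) = ρ^2 * (1/(x^2*(z-x))) := by
    intro x hx
    rw [div_mul_div_comm]
    rw [mul_one_div, ← sq]
  rw [intervalIntegral.integral_congr heq, key]
  have hz1 : z - (z-1) = 1 := by ring
  rw [hz1, Real.log_one]
  have h0 : z ≠ 0 := by linarith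
  have h1 : z - 1 ≠ 0 := by linarith
  field_simp
  ring

lemma conv_eval (ρ : ℝ) (hρ0 : 0 < ρ) (hρ1 : ρ < 1) {z : ℝ} (hz2 : 2 < z) (hz3 : z ≤ 3) :
    ∫⁻ x, ENNReal.ofReal (auxG ρ (z - x)) ∂(auxNu ρ)
      = ENNReal.ofReal (ρ^2 * (2*Real.log (z-1)/z^2 + 2/z)) := by
  have hfm : Measurable fun x => ENNReal.ofReal (auxG ρ (z - x)) :=
    ((measurable_auxG ρ).comp (measurable_const.sub measurable_id)).ennreal_ofReal
  have hgm : Measurable ((Set.Ico (1:ℝ) 2).indicator fun y => ENNReal.ofReal (ρ / y^2)) :=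
    ((measurable_const.div (measurable_id.pow_const 2)).ennreal_ofReal).indicator
      measurableSet_Ico
  rw [auxNu, lintegral_add_measure, lintegral_add_measure, lintegral_smul_measure,
    lintegral_smul_measure, lintegral_dirac, lintegral_dirac]
  have hz0 : auxG ρ (z - 0) = 0 := by
    unfold auxG; split_ifs with h1 h2 h3
    · linarith
    · linarith
    · linarith
    · rfl
  have hz2' : auxG ρ (z - 2) = ρ := by
    unfold auxG; split_ifs with h1 h2 h3
    · linarith
    · rfl
    · linarith
    · linarith
  rw [hz0, hz2']
  simp only [ENNReal.ofReal_zero, smul_eq_mul, mul_zero, zero_add]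
  -- density part
  rw [auxDen, lintegral_withDensity_eq_lintegral_mul _ hgm hfm]
  have hpt : ∀ x, ((Set.Ico (1:ℝ) 2).indicator (fun y => ENNReal.ofReal (ρ / y^2)) *
        fun x => ENNReal.ofReal (auxG ρ (z - x))) x
      = (Set.Ico (1:ℝ) 2).indicator (fun x => ENNReal.ofReal (ρ/x^2 * auxG ρ (z-x))) x := by
    intro x
    simp only [Pi.mul_apply, Set.indicator_apply]
    split_ifs
    · rw [ENNReal.ofReal_mul (by positivity)]
    · simp
  rw [lintegral_congr hpt, lintegral_indicator measurableSet_Ico]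
  have hψm : Measurable fun x => ρ/x^2 * auxG ρ (z - x) :=
    (measurable_const.div (measurable_id.pow_const 2)).mul
      ((measurable_auxG ρ).comp (measurable_const.sub measurable_id))
  have hInt : IntegrableOn (fun x => ρ/x^2 * auxG ρ (z-x)) (Set.Ico 1 2) := by
    constructor
    · exact hψm.aestronglyMeasurable.restrict
    · apply MeasureTheory.HasFiniteIntegral.of_bounded (C := ρ)
      rw [ae_restrict_iff' measurableSet_Ico]
      filter_upwards with x hx
      have h1 : (1:ℝ) ≤ x := hx.1
      have hx0 : (0:ℝ) < x := lt_of_lt_of_le one_pos h1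
      rw [Real.norm_eq_abs, abs_of_nonneg (mul_nonneg (by positivity) (auxG_nonneg hρ0.le _))]
      calc ρ/x^2 * auxG ρ (z-x) ≤ ρ/x^2 * 1 :=
            mul_le_mul_of_nonneg_left (auxG_le_one hρ0.le hρ1.le _) (by positivity)
        _ ≤ ρ := by
            rw [mul_one]
            exact div_le_self hρ0.le (by nlinarith)
  have hnn : 0 ≤ᵐ[MeasureTheory.volume.restrict (Set.Ico (1:ℝ) 2)]
      fun x => ρ/x^2 * auxG ρ (z-x) := by
    filter_upwards with x
    exact mul_nonneg (div_nonneg hρ0.le (sq_nonneg x)) (auxG_nonneg hρ0.le _)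
  rw [← ofReal_integral_eq_lintegral_ofReal hInt hnn]
  have hIntNonneg : 0 ≤ ∫ x in Set.Ico (1:ℝ) 2, ρ/x^2 * auxG ρ (z-x) :=
    setIntegral_nonneg measurableSet_Ico fun x _ =>
      mul_nonneg (div_nonneg hρ0.le (sq_nonneg x)) (auxG_nonneg hρ0.le _)
  rw [← ENNReal.ofReal_mul (by linarith : (0:ℝ) ≤ ρ/2),
    ← ENNReal.ofReal_add (by nlinarith : (0:ℝ) ≤ ρ/2*ρ) hIntNonneg]
  congr 1
  have hIco : Set.Ico (1:ℝ) 2 = Set.Ico 1 (z-1) ∪ Set.Ico (z-1) 2 :=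
    (Set.Ico_union_Ico_eq_Ico (by linarith) (by linarith)).symm
  have hsub1 : Set.Ico (1:ℝ) (z-1) ⊆ Set.Ico 1 2 := Set.Ico_subset_Ico_right (by linarith)
  have hsub2 : Set.Ico (z-1) (2:ℝ) ⊆ Set.Ico 1 2 := Set.Ico_subset_Ico_left (by linarith)
  have hIsplit : ∫ x in Set.Ico (1:ℝ) 2, ρ/x^2 * auxG ρ (z-x)
      = (∫ x in Set.Ico (1:ℝ) (z-1), ρ/x^2 * auxG ρ (z-x))
        + ∫ x in Set.Ico (z-1) (2:ℝ), ρ/x^2 * auxG ρ (z-x) := by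
    rw [hIco]
    exact MeasureTheory.setIntegral_union Set.Ico_disjoint_Ico_same
      measurableSet_Ico (hInt.mono_set hsub1) (hInt.mono_set hsub2)
  have e1 : ∫ x in Set.Ico (1:ℝ) (z-1), ρ/x^2 * auxG ρ (z-x)
      = ρ^2 * (2*Real.log (z-1)/z^2 - 1/(z*(z-1)) + 1/z) := by
    have hcg : ∀ x ∈ Set.Ico (1:ℝ) (z-1), ρ/x^2 * auxG ρ (z-x) = ρ/x^2 * (ρ/(z-x)) := by
      intro x hx
      congr 1
      unfold auxG
      split_ifs with h1 h2 h3
      · exfalso; linarith [hx.2]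
      · exfalso; linarith [hx.2]
      · rfl
      · exfalso; push_neg at h3; linarith [hx.1]
    rw [setIntegral_congr_fun measurableSet_Ico hcg,
      MeasureTheory.integral_Ico_eq_integral_Ioo, ← MeasureTheory.integral_Ioc_eq_integral_Ioo,
      ← intervalIntegral.integral_of_le (by linarith : (1:ℝ) ≤ z-1), ftc1 ρ hz2 hz3]
  have e2 : ∫ x in Set.Ico (z-1) (2:ℝ), ρ/x^2 * auxG ρ (z-x)
      = (ρ*ρ)/(z-1) - (ρ*ρ)/2 := by
    have hcg : ∀ x ∈ Set.Ico (z-1) (2:ℝ), ρ/x^2 * auxG ρ (z-x) = (ρ*ρ)/x^2 := by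
      intro x hx
      have : auxG ρ (z-x) = ρ := by
        unfold auxG
        split_ifs with h1 h2 h3
        · exfalso; linarith [hx.2]
        · rfl
        · exfalso; push_neg at h2; linarith [hx.1]
        · exfalso; push_neg at h3; linarith [hx.1]
      rw [this]; ring
    rw [setIntegral_congr_fun measurableSet_Ico hcg,
      integral_rho_sq (ρ*ρ) (by linarith) (by linarith)]
  rw [hIsplit, e1, e2]
  have h0 : z ≠ 0 := by linarith
  have h1 : z - 1 ≠ 0 := by linarith
  field_simp
  ring

lemma auxg_strictMono (ρ : ℝ) (hρ0 : 0 < ρ) :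
    StrictMonoOn (fun z : ℝ => 2*ρ^2*(Real.log (z-1)/z + 1)) (Set.Ioc 2 3) := by
  apply strictMonoOn_of_deriv_pos (convex_Ioc 2 3)
  · apply ContinuousOn.mul continuousOn_const
    apply ContinuousOn.add _ continuousOn_const
    apply ContinuousOn.div
    · apply Real.continuousOn_log.comp (continuousOn_id.sub continuousOn_const)
      intro x hx
      simp only [Set.mem_compl_iff, Set.mem_singleton_iff]
      have := hx.1
      intro h; simp [sub_eq_zero] at h; linarith
    · exact continuousOn_id
    · intro x hx; have := hx.1; intro h; rw [h] at this; linarith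
  · intro x hx
    rw [interior_Ioc] at hx
    obtain ⟨hx2, hx3⟩ := hx
    have hx1 : (1:ℝ) < x - 1 := by linarith
    have hx0 : (0:ℝ) < x := by linarith
    have hd : HasDerivAt (fun z : ℝ => 2*ρ^2*(Real.log (z-1)/z + 1))
        (2*ρ^2*((((x-1)⁻¹) * x - Real.log (x-1) * 1)/x^2)) x := by
      have hlog : HasDerivAt (fun z : ℝ => Real.log (z-1)) ((x-1)⁻¹) x := by
        have hb : HasDerivAt (fun z : ℝ => z - 1) 1 x := (hasDerivAt_id x).sub_const 1
        have := (Real.hasDerivAt_log (by linarith : x - 1 ≠ 0)).comp x hb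
        simpa [Function.comp_def] using this
      exact ((hlog.div (hasDerivAt_id x) hx0.ne').add_const 1).const_mul (2*ρ^2)
    rw [hd.deriv]
    have hnum : 0 < (x-1)⁻¹ * x - Real.log (x-1) * 1 := by
      have h1 : 1 < (x-1)⁻¹ * x := by
        rw [inv_mul_eq_div, lt_div_iff₀ (by linarith)]
        linarith
      have h2 : Real.log (x-1) < 1 := by
        have := Real.log_lt_log (by linarith : (0:ℝ) < x - 1) (by linarith : x - 1 < 2)
        have h2lt := Real.log_two_lt_d9
        linarith
      linarith
    positivity

theorem stmt_16 {Ω : Type*} [MeasurableSpace Ω] {μ : Measure Ω} [IsProbabilityMeasure μ]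
    (Y₁ Y₂ : Ω → ℝ) (hY₁ : Measurable Y₁) (hY₂ : Measurable Y₂)
    (hindep : IndepFun Y₁ Y₂ μ)
    (ρ : ℝ) (hρ0 : 0 < ρ) (hρ1 : ρ < 1)
    (htail : ∀ Y ∈ ({Y₁, Y₂} : Set (Ω → ℝ)),
      (∀ y : ℝ, y ≤ 0 → (μ {ω | y ≤ Y ω}).toReal = 1) ∧
      (∀ y : ℝ, 0 < y → y ≤ 1 → (μ {ω | y ≤ Y ω}).toReal = ρ) ∧
      (∀ y : ℝ, 1 ≤ y → y ≤ 2 → (μ {ω | y ≤ Y ω}).toReal = ρ / y) ∧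
      (∀ y : ℝ, 2 < y → (μ {ω | y ≤ Y ω}).toReal = 0)) :
    (∀ z ∈ Set.Ioc (2 : ℝ) 3,
        z * (μ {ω | z ≤ Y₁ ω + Y₂ ω}).toReal =
          2 * ρ ^ 2 * (Real.log (z - 1) / z + 1)) ∧
      StrictMonoOn (fun z : ℝ => z * (μ {ω | z ≤ Y₁ ω + Y₂ ω}).toReal)
        (Set.Ioc (2 : ℝ) 3) ∧
      (3 : ℝ) * (μ {ω | (3 : ℝ) ≤ Y₁ ω + Y₂ ω}).toReal =
        2 * ρ ^ 2 * (1 + Real.log 2 / 3) := by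
  obtain ⟨h11, h12, h13, h14⟩ := htail Y₁ (Or.inl rfl)
  obtain ⟨h21, h22, h23, h24⟩ := htail Y₂ (Or.inr rfl)
  have hm1 := map_eq_auxNu hY₁ hρ0 hρ1 h11 h12 h13 h14
  have hm2 := map_eq_auxNu hY₂ hρ0 hρ1 h21 h22 h23 h24
  have key : ∀ z ∈ Set.Ioc (2:ℝ) 3, (μ {ω | z ≤ Y₁ ω + Y₂ ω}).toReal
      = ρ^2 * (2*Real.log (z-1)/z^2 + 2/z) := by
    intro z hz
    rw [sum_tail hY₁ hY₂ hindep hm1 hm2 z]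
    have hcg : ∫⁻ x, auxNu ρ (Set.Ici (z - x)) ∂(auxNu ρ)
        = ∫⁻ x, ENNReal.ofReal (auxG ρ (z - x)) ∂(auxNu ρ) :=
      lintegral_congr fun x => auxNu_Ici ρ hρ0.le hρ1.le _
    rw [hcg, conv_eval ρ hρ0 hρ1 hz.1 hz.2, ENNReal.toReal_ofReal]
    have hlog : 0 ≤ Real.log (z-1) := Real.log_nonneg (by linarith [hz.1])
    have hz0 : (0:ℝ) < z := by linarith [hz.1]
    positivity
  have part1 : ∀ z ∈ Set.Ioc (2:ℝ) 3, z * (μ {ω | z ≤ Y₁ ω + Y₂ ω}).toReal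
      = 2*ρ^2*(Real.log (z-1)/z + 1) := by
    intro z hz
    rw [key z hz]
    have h0 : z ≠ 0 := by have := hz.1; intro h; rw [h] at this; linarith
    field_simp
  refine ⟨part1, ?_, ?_⟩
  · intro a ha b hb hab
    simp only
    rw [part1 a ha, part1 b hb]
    exact auxg_strictMono ρ hρ0 ha hb hab
  · have h3 : (3:ℝ) ∈ Set.Ioc (2:ℝ) 3 := ⟨by norm_num, le_refl 3⟩
    rw [part1 3 h3, show (3:ℝ) - 1 = 2 by norm_num]
    ring
end
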